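/- arXiv:2506.03116 — 3 statements merged into one kernel-verified Lean document; each statement's English description precedes it below -/
import Mathlib

section
/- For every n ≥ 0, the number of lattice paths in P_n equals C(2n,n)·(4n+4)(2n+1)/(n+2), where C(2n,n) is the central binomial coefficient. -/
/-- The four unit steps of a lattice path. -/
inductive Step : Type
  | N | S | E | W
  deriving DecidableEq

/-- The vector in `ℤ × ℤ` corresponding to a step. -/
def stepVec : Step → ℤ × ℤ
  | Step.N => (0, 1)
  | Step.S => (0, -1)
  | Step.E => (1, 0)
  | Step.W => (-1, 0)

/-- The endpoint of the lattice path described by the word `w`, starting at the origin. -/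
def endpt (w : List Step) : ℤ × ℤ := (w.map stepVec).sum

/-- `w` is a lattice path in `𝒫ₙ`: it has length `2n+2`, stays weakly in the first
quadrant, and ends at `(n, n)`. -/
def IsPath (n : ℕ) (w : List Step) : Prop :=
  w.length = 2 * n + 2 ∧
  (∀ k : ℕ, 0 ≤ (endpt (w.take k)).1 ∧ 0 ≤ (endpt (w.take k)).2) ∧
  endpt w = ((n : ℤ), (n : ℤ))

/-- The cells of the Young diagram of `θ⁽ⁿ⁾ = (n+2, 2, 1ⁿ)`, in (row, column) matrix
coordinates, 0-indexed, English orientation. -/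
def cells (n : ℕ) : Set (ℕ × ℕ) :=
  {c | (c.1 = 0 ∧ c.2 ≤ n + 1) ∨ c = (1, 1) ∨ (c.2 = 0 ∧ 1 ≤ c.1 ∧ c.1 ≤ n + 1)}

/-- `T` is a standard Young tableau of shape `θ⁽ⁿ⁾`: it is a bijective filling of the
cells with `1, …, 2n+4` (and `0` elsewhere), strictly increasing along rows and
down columns. -/
def IsSYT (n : ℕ) (T : ℕ × ℕ → ℕ) : Prop :=
  (∀ c, c ∉ cells n → T c = 0) ∧
  Set.BijOn T (cells n) (Set.Icc 1 (2 * n + 4)) ∧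
  (∀ c ∈ cells n, ∀ d ∈ cells n, c.1 = d.1 → c.2 < d.2 → T c < T d) ∧
  (∀ c ∈ cells n, ∀ d ∈ cells n, c.2 = d.2 → c.1 < d.1 → T c < T d)

/-- The value `m` appears in the arm (first row) of `T`. -/
def InArm (n : ℕ) (T : ℕ × ℕ → ℕ) (m : ℕ) : Prop := ∃ j ≤ n + 1, T (0, j) = m

/-- The value `m` appears in the leg (first column) of `T`. -/
def InLeg (n : ℕ) (T : ℕ × ℕ → ℕ) (m : ℕ) : Prop := ∃ i ≤ n + 1, T (i, 0) = m

/-- The value `m` appears in the heart (the cell `(1,1)`) of `T`. -/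
def InHeart (T : ℕ × ℕ → ℕ) (m : ℕ) : Prop := T (1, 1) = m

open Classical in
/-- The map ψ: the `i`-th letter (1-based, `i = k+1` for `k : Fin (2n+2)`) is determined by
the position of the entry `i+2` of `T`, and, if `i+2` is in the heart, by the position of `2`. -/
noncomputable def psi (n : ℕ) (T : ℕ × ℕ → ℕ) : List Step :=
  List.ofFn (fun k : Fin (2 * n + 2) =>
    if InArm n T (k.val + 3) then Step.E
    else if InLeg n T (k.val + 3) then Step.N
    else if InHeart T (k.val + 3) ∧ InArm n T 2 then Step.S
    else Step.W)

lemma endpt_eq (w : List Step) :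
    endpt w = ((w.count Step.E : ℤ) - w.count Step.W,
               (w.count Step.N : ℤ) - w.count Step.S) := by
  induction w with
  | nil => simp [endpt]; rfl
  | cons a l ih =>
    cases a <;>
      simp [endpt, stepVec, List.count_cons, Prod.ext_iff] at ih ⊢ <;>
      · constructor <;> push_cast <;> omega

lemma length_eq_counts (w : List Step) :
    w.length = w.count Step.E + w.count Step.W + w.count Step.N + w.count Step.S := by
  induction w with
  | nil => simp
  | cons a l ih => cases a <;> simp [List.count_cons, ih] <;> omega

def PW (n : ℕ) (w : List Step) : Prop :=
  w.length = 2 * n + 2 ∧ w.count Step.W = 1 ∧ w.count Step.S = 0 ∧ w.count Step.N = n ∧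
  ∀ k, (w.take k).count Step.W ≤ (w.take k).count Step.E

def PS (n : ℕ) (w : List Step) : Prop :=
  w.length = 2 * n + 2 ∧ w.count Step.S = 1 ∧ w.count Step.W = 0 ∧ w.count Step.E = n ∧
  ∀ k, (w.take k).count Step.S ≤ (w.take k).count Step.N

lemma isPath_iff (n : ℕ) (w : List Step) : IsPath n w ↔ PW n w ∨ PS n w := by
  constructor
  · rintro ⟨hlen, hpre, hend⟩
    rw [endpt_eq, Prod.ext_iff] at hend
    obtain ⟨h1, h2⟩ := hend
    simp only at h1 h2
    have hl := length_eq_counts w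
    rw [hlen] at hl
    have hWS : w.count Step.W + w.count Step.S = 1 := by omega
    rcases Nat.eq_zero_or_pos (w.count Step.S) with hS | hS
    · left
      refine ⟨hlen, by omega, hS, by omega, fun k => ?_⟩
      have := (hpre k).1
      rw [endpt_eq] at this
      simp only at this
      omega
    · right
      refine ⟨hlen, by omega, by omega, by omega, fun k => ?_⟩
      have := (hpre k).2
      rw [endpt_eq] at this
      simp only at this
      omega
  · rintro (⟨hlen, hW, hS, hN, hpre⟩ | ⟨hlen, hS, hW, hE, hpre⟩) <;>
    · have hl := length_eq_counts w
      rw [hlen] at hl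
      refine ⟨hlen, fun k => ?_, ?_⟩
      · have h1 := hpre k
        have h2 : (w.take k).count Step.S ≤ w.count Step.S :=
          (List.take_sublist k w).count_le _
        have h3 : (w.take k).count Step.W ≤ w.count Step.W :=
          (List.take_sublist k w).count_le _
        rw [endpt_eq]
        constructor <;> simp only <;> omega
      · rw [endpt_eq, Prod.ext_iff]
        constructor <;> simp only <;> omega

lemma countP_eq_sum' {α : Type} (l : List α) (p : α → Bool) :
    l.countP p = (l.map (fun x => if p x then 1 else 0)).sum := by
  induction l with
  | nil => simp
  | cons a l ih => by_cases h : p a <;> simp [List.countP_cons, h, ih] <;> omega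

lemma count_eq_sum' {α : Type} [DecidableEq α] (l : List α) (a : α) :
    l.count a = (l.map (fun x => if x = a then 1 else 0)).sum := by
  rw [List.count_eq_countP, countP_eq_sum']
  congr 1
  apply List.map_congr_left
  intro x _
  by_cases h : x = a <;> simp [h]

lemma count_take_ofFn {α : Type} [DecidableEq α] {m : ℕ} (f : Fin m → α) (a : α) (k : ℕ) :
    ((List.ofFn f).take k).count a
      = (Finset.univ.filter (fun i : Fin m => f i = a ∧ i.val < k)).card := by
  rw [count_eq_sum', List.map_take, List.map_ofFn]
  rw [List.sum_take_ofFn, Finset.card_filter, Finset.sum_filter]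
  apply Finset.sum_congr rfl
  intro i _
  by_cases h1 : f i = a <;> by_cases h2 : (i : ℕ) < k <;> simp [Function.comp, h1, h2]

lemma count_ofFn {α : Type} [DecidableEq α] {m : ℕ} (f : Fin m → α) (a : α) :
    (List.ofFn f).count a = (Finset.univ.filter (fun i => f i = a)).card := by
  have := count_take_ofFn f a m
  rwa [List.take_of_length_le (by simp), Finset.filter_congr
    (fun i _ => by simp [i.isLt] : ∀ i ∈ Finset.univ, (f i = a ∧ i.val < m) ↔ (f i = a))] at this

def wordOf {n : ℕ} (x : Fin (2*n+2) × Finset (Fin (2*n+2))) : List Step :=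
  List.ofFn (fun i => if i = x.1 then Step.W else if i ∈ x.2 then Step.N else Step.E)

def GoodW (n : ℕ) (x : Fin (2*n+2) × Finset (Fin (2*n+2))) : Prop :=
  x.1 ∉ x.2 ∧ x.2.card = n ∧ ¬ (Finset.Iio x.1 ⊆ x.2)

lemma wordOf_count_W {n : ℕ} (x : Fin (2*n+2) × Finset (Fin (2*n+2))) :
    (wordOf x).count Step.W = 1 := by
  rw [wordOf, count_ofFn]
  have : (Finset.univ.filter fun i =>
      (if i = x.1 then Step.W else if i ∈ x.2 then Step.N else Step.E) = Step.W)
      = {x.1} := by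
    ext i
    by_cases h : i = x.1 <;> by_cases h2 : i ∈ x.2 <;> simp [h, h2]
  rw [this, Finset.card_singleton]

lemma wordOf_count_N {n : ℕ} (x : Fin (2*n+2) × Finset (Fin (2*n+2))) (hx : x.1 ∉ x.2) :
    (wordOf x).count Step.N = x.2.card := by
  rw [wordOf, count_ofFn]
  congr 1
  ext i
  by_cases h : i = x.1 <;> by_cases h2 : i ∈ x.2 <;> simp [h, h2] <;> subst h <;> simp [hx]

lemma wordOf_count_S {n : ℕ} (x : Fin (2*n+2) × Finset (Fin (2*n+2))) :
    (wordOf x).count Step.S = 0 := by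
  rw [wordOf, count_ofFn]
  convert Finset.card_empty
  ext i
  by_cases h : i = x.1 <;> by_cases h2 : i ∈ x.2 <;> simp [h, h2]

lemma PW_wordOf {n : ℕ} {x : Fin (2*n+2) × Finset (Fin (2*n+2))} (hx : GoodW n x) :
    PW n (wordOf x) := by
  obtain ⟨h1, h2, h3⟩ := hx
  obtain ⟨q, hq, hqS⟩ : ∃ q, q < x.1 ∧ q ∉ x.2 := by
    rcases Finset.not_subset.mp h3 with ⟨q, hq1, hq2⟩
    exact ⟨q, Finset.mem_Iio.mp hq1, hq2⟩
  refine ⟨by simp [wordOf], wordOf_count_W x, wordOf_count_S x, by rw [wordOf_count_N x h1, h2],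
    fun k => ?_⟩
  rw [wordOf, count_take_ofFn, count_take_ofFn]
  by_cases hk : (x.1 : ℕ) < k
  · have hle : (Finset.univ.filter fun i : Fin (2*n+2) =>
        (if i = x.1 then Step.W else if i ∈ x.2 then Step.N else Step.E) = Step.W ∧ i.val < k)
        ⊆ {x.1} := by
      intro i hi
      rcases Finset.mem_filter.mp hi with ⟨-, hi1, -⟩
      by_cases h : i = x.1 <;> by_cases h2 : i ∈ x.2 <;> simp_all
    have h1' : q ∈ (Finset.univ.filter fun i : Fin (2*n+2) =>
        (if i = x.1 then Step.W else if i ∈ x.2 then Step.N else Step.E) = Step.E ∧ i.val < k) := by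
      have hqx : q ≠ x.1 := Fin.ne_of_lt hq
      have : (q : ℕ) < k := lt_trans hq hk
      simp [hqx, hqS, this]
    calc _ ≤ ({x.1} : Finset (Fin (2*n+2))).card := Finset.card_le_card hle
    _ = 1 := Finset.card_singleton _
    _ ≤ _ := Finset.card_pos.mpr ⟨q, h1'⟩
  · have hemp : (Finset.univ.filter fun i : Fin (2*n+2) =>
        (if i = x.1 then Step.W else if i ∈ x.2 then Step.N else Step.E) = Step.W ∧ i.val < k)
        = ∅ := by
      ext i
      simp only [Finset.mem_filter, Finset.notMem_empty, iff_false, not_and]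
      intro _ hW
      by_cases h : i = x.1
      · subst h; omega
      · by_cases h2 : i ∈ x.2 <;> simp [h, h2] at hW
    rw [hemp]
    simp

noncomputable def Phi (n : ℕ) (x : {x : Fin (2*n+2) × Finset (Fin (2*n+2)) // GoodW n x}) :
    {w : List Step // PW n w} := ⟨wordOf x.1, PW_wordOf x.2⟩

lemma Phi_bijective (n : ℕ) : Function.Bijective (Phi n) := by
  constructor
  · rintro ⟨⟨p, S⟩, hx⟩ ⟨⟨q, T⟩, hy⟩ h
    simp only [Phi, Subtype.mk.injEq, wordOf] at h
    have hf := List.ofFn_injective h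
    have hpq : p = q := by
      by_contra hne
      have := congrFun hf p
      simp only [if_pos rfl] at this
      rw [if_neg hne] at this
      by_cases h2 : p ∈ T <;> simp [h2] at this
    subst hpq
    have hST : S = T := by
      ext i
      by_cases hip : i = p
      · subst hip
        simp [hx.1, hy.1]
      · have := congrFun hf i
        rw [if_neg hip, if_neg hip] at this
        by_cases h1 : i ∈ S <;> by_cases h2 : i ∈ T <;> simp_all
    simp [hST]
  · rintro ⟨w, hw⟩
    obtain ⟨hlen, hW, hS, hN, hpre⟩ := hw
    set f : Fin (2*n+2) → Step := fun i => w.get (Fin.cast hlen.symm i) with hfdef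
    have hwf : w = List.ofFn f := by
      apply List.ext_getElem (by simp [hlen])
      intro i h1 h2
      simp only [List.getElem_ofFn, hfdef]
      rfl
    obtain ⟨pidx, hpidx⟩ : ∃ p : Fin w.length, w.get p = Step.W := by
      have : Step.W ∈ w := List.count_pos_iff.mp (by rw [hW]; norm_num)
      exact List.mem_iff_get.mp this
    set p : Fin (2*n+2) := Fin.cast hlen pidx with hpdef
    have hfp : f p = Step.W := by
      simp only [hfdef, hpdef]
      convert hpidx
      rfl
    set S : Finset (Fin (2*n+2)) := Finset.univ.filter (fun i => f i = Step.N) with hSdef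
    have hcW : (Finset.univ.filter (fun i => f i = Step.W)).card = 1 := by
      rw [← count_ofFn, ← hwf, hW]
    have hunique : ∀ i, f i = Step.W → i = p := by
      intro i hi
      obtain ⟨a, ha⟩ := Finset.card_eq_one.mp hcW
      have h1 : i ∈ Finset.univ.filter (fun i => f i = Step.W) := by simp [hi]
      have h2 : p ∈ Finset.univ.filter (fun i => f i = Step.W) := by simp [hfp]
      rw [ha, Finset.mem_singleton] at h1 h2
      rw [h1, h2]
    have hnoS : ∀ i, f i ≠ Step.S := by
      intro i hi
      have : (Finset.univ.filter (fun i => f i = Step.S)).card = 0 := by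
        rw [← count_ofFn, ← hwf, hS]
      have h1 : i ∈ Finset.univ.filter (fun i => f i = Step.S) := by simp [hi]
      simp [Finset.card_eq_zero.mp this] at h1
    have hword : wordOf (p, S) = w := by
      rw [hwf, wordOf]
      congr 1
      funext i
      rcases h : f i with _ | _ | _ | _
      · have hip : i ≠ p := fun hh => by rw [hh, hfp] at h; exact Step.noConfusion h
        have hiS : i ∈ S := by simp [hSdef, h]
        simp [hip, hiS]
      · exact absurd h (hnoS i)
      · have hip : i ≠ p := fun hh => by rw [hh, hfp] at h; exact Step.noConfusion h
        have hiS : i ∉ S := by simp [hSdef, h]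
        simp [hip, hiS]
      · rw [if_pos (hunique i h)]
    have hpS : p ∉ S := by simp [hSdef, hfp]
    have hcard : S.card = n := by rw [hSdef, ← count_ofFn, ← hwf, hN]
    have hgood : ¬ (Finset.Iio p ⊆ S) := by
      intro hsub
      have h1 := hpre (p.val + 1)
      rw [hwf, count_take_ofFn, count_take_ofFn] at h1
      have hWin : p ∈ Finset.univ.filter
          (fun i : Fin (2*n+2) => f i = Step.W ∧ i.val < p.val + 1) := by
        simp [hfp]
      have hpos : 0 < (Finset.univ.filter
          (fun i : Fin (2*n+2) => f i = Step.E ∧ i.val < p.val + 1)).card := by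
        calc 0 < (Finset.univ.filter
            (fun i : Fin (2*n+2) => f i = Step.W ∧ i.val < p.val + 1)).card :=
          Finset.card_pos.mpr ⟨p, hWin⟩
        _ ≤ _ := h1
      obtain ⟨q, hq⟩ := Finset.card_pos.mp hpos
      rcases Finset.mem_filter.mp hq with ⟨-, hqE, hqlt⟩
      have hqp : q ≠ p := fun hh => by rw [hh, hfp] at hqE; exact Step.noConfusion hqE
      have hqltp : q < p := by
        have : q.val < p.val := by
          rcases Nat.lt_or_ge q.val p.val with h | h
          · exact h
          · exact absurd (Fin.val_injective (by omega)) hqp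
        exact this
      have := hsub (Finset.mem_Iio.mpr hqltp)
      simp [hSdef, hqE] at this
    exact ⟨⟨(p, S), ⟨hpS, hcard, hgood⟩⟩, Subtype.ext hword⟩

lemma cardA (n : ℕ) :
    (Finset.univ.filter (fun x : Fin (2*n+2) × Finset (Fin (2*n+2)) =>
      x.1 ∉ x.2 ∧ x.2.card = n)).card = (n+1) * Nat.choose (2*n+2) (n+1) := by
  classical
  set A := Finset.univ.filter (fun x : Fin (2*n+2) × Finset (Fin (2*n+2)) =>
      x.1 ∉ x.2 ∧ x.2.card = n) with hA
  set B := Finset.univ.filter (fun x : Fin (2*n+2) × Finset (Fin (2*n+2)) =>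
      x.1 ∈ x.2 ∧ x.2.card = n+1) with hB
  have hAB : A.card = B.card := by
    apply Finset.card_nbij' (fun x => (x.1, insert x.1 x.2)) (fun x => (x.1, x.2.erase x.1))
    · intro x hx
      rcases Finset.mem_filter.mp hx with ⟨-, h1, h2⟩
      simp [hB, Finset.card_insert_of_notMem h1, h2]
    · intro x hx
      rcases Finset.mem_filter.mp hx with ⟨-, h1, h2⟩
      have := Finset.card_erase_of_mem h1
      simp [hA, this, h2]
    · intro x hx
      rcases Finset.mem_filter.mp hx with ⟨-, h1, h2⟩
      simp [Finset.erase_insert h1]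
    · intro x hx
      rcases Finset.mem_filter.mp hx with ⟨-, h1, h2⟩
      simp [Finset.insert_erase h1]
  rw [hAB]
  have := Finset.card_eq_sum_card_fiberwise
    (f := fun x : Fin (2*n+2) × Finset (Fin (2*n+2)) => x.2)
    (s := B) (t := Finset.univ.powersetCard (n+1))
    (by intro x hx
        rcases Finset.mem_filter.mp hx with ⟨-, -, h2⟩
        exact Finset.mem_powersetCard_univ.mpr h2)
  rw [this]
  have hfib : ∀ T ∈ Finset.univ.powersetCard (n+1),
      (B.filter (fun x => x.2 = T)).card = n+1 := by
    intro T hT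
    have hTcard : T.card = n+1 := Finset.mem_powersetCard_univ.mp hT
    rw [← hTcard]
    apply Finset.card_bij (fun x _ => x.1)
    · intro x hx
      rcases Finset.mem_filter.mp hx with ⟨hxB, h2⟩
      rcases Finset.mem_filter.mp hxB with ⟨-, h1, -⟩
      exact h2 ▸ h1
    · intro x hx y hy h
      rcases Finset.mem_filter.mp hx with ⟨-, h2⟩
      rcases Finset.mem_filter.mp hy with ⟨-, h3⟩
      exact Prod.ext h (h2.trans h3.symm)
    · intro p hp
      refine ⟨(p, T), Finset.mem_filter.mpr ⟨Finset.mem_filter.mpr ⟨Finset.mem_univ _, hp, hTcard⟩, rfl⟩, rfl⟩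
  rw [Finset.sum_congr rfl hfib, Finset.sum_const, Finset.card_powersetCard, Finset.card_univ,
    Fintype.card_fin, smul_eq_mul, mul_comm]

lemma cardBad (n : ℕ) :
    ((Finset.univ.filter (fun x : Fin (2*n+2) × Finset (Fin (2*n+2)) =>
      x.1 ∉ x.2 ∧ x.2.card = n)).filter (fun x => Finset.Iio x.1 ⊆ x.2)).card
      = Nat.choose (2*n+2) (n+2) := by
  classical
  have hne : ∀ V ∈ (Finset.univ : Finset (Fin (2*n+2))).powersetCard (n+2), V.Nonempty := by
    intro V hV
    have := Finset.mem_powersetCard_univ.mp hV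
    exact Finset.card_pos.mp (by omega)
  have key : ((Finset.univ.filter (fun x : Fin (2*n+2) × Finset (Fin (2*n+2)) =>
      x.1 ∉ x.2 ∧ x.2.card = n)).filter (fun x => Finset.Iio x.1 ⊆ x.2)).card
      = ((Finset.univ : Finset (Fin (2*n+2))).powersetCard (n+2)).card := by
    refine Finset.card_bij' (fun x _ => x.2ᶜ)
      (fun V hV => (V.min' (hne V hV), Vᶜ)) ?_ ?_ ?_ ?_
    · intro x hx
      rcases Finset.mem_filter.mp hx with ⟨hx1, -⟩
      rcases Finset.mem_filter.mp hx1 with ⟨-, -, h2⟩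
      rw [Finset.mem_powersetCard_univ, Finset.card_compl, Fintype.card_fin, h2]
      omega
    · intro V hV
      have hVc : V.card = n+2 := Finset.mem_powersetCard_univ.mp hV
      have hmin : V.min' (hne V hV) ∈ V := Finset.min'_mem _ _
      refine Finset.mem_filter.mpr ⟨Finset.mem_filter.mpr ⟨Finset.mem_univ _, ?_, ?_⟩, ?_⟩
      · simp [hmin]
      · rw [Finset.card_compl, Fintype.card_fin, hVc]
        omega
      · intro q hq
        rw [Finset.mem_Iio] at hq
        rw [Finset.mem_compl]
        intro hqV
        exact absurd (Finset.min'_le V q hqV) (not_le.mpr hq)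
    · intro x hx
      rcases Finset.mem_filter.mp hx with ⟨hx1, hsub⟩
      rcases Finset.mem_filter.mp hx1 with ⟨-, h1, -⟩
      have h2 : x.1 ∈ x.2ᶜ := Finset.mem_compl.mpr h1
      have hminx : x.2ᶜ.min' ⟨x.1, h2⟩ = x.1 := by
        apply le_antisymm (Finset.min'_le _ _ h2)
        apply Finset.le_min'
        intro q hq
        rw [Finset.mem_compl] at hq
        by_contra hlt
        exact hq (hsub (Finset.mem_Iio.mpr (not_le.mp hlt)))
      exact Prod.ext hminx (compl_compl x.2)
    · intro V hV
      exact compl_compl V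
  rw [key, Finset.card_powersetCard, Finset.card_univ, Fintype.card_fin]

lemma cardGoodW (n : ℕ) :
    Nat.card {x : Fin (2*n+2) × Finset (Fin (2*n+2)) // GoodW n x}
      = (n+1) * Nat.choose (2*n+2) (n+1) - Nat.choose (2*n+2) (n+2) := by
  classical
  rw [Nat.card_eq_fintype_card, Fintype.card_subtype]
  have hsplit : (Finset.univ.filter (fun x : Fin (2*n+2) × Finset (Fin (2*n+2)) =>
      x.1 ∉ x.2 ∧ x.2.card = n)).card
      = ((Finset.univ.filter (fun x : Fin (2*n+2) × Finset (Fin (2*n+2)) =>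
          x.1 ∉ x.2 ∧ x.2.card = n)).filter (fun x => Finset.Iio x.1 ⊆ x.2)).card
        + ((Finset.univ.filter (fun x : Fin (2*n+2) × Finset (Fin (2*n+2)) =>
          x.1 ∉ x.2 ∧ x.2.card = n)).filter (fun x => ¬ Finset.Iio x.1 ⊆ x.2)).card :=
    (Finset.card_filter_add_card_filter_not _).symm
  have hGood : (Finset.univ.filter (fun x => GoodW n x)).card
      = ((Finset.univ.filter (fun x : Fin (2*n+2) × Finset (Fin (2*n+2)) =>
          x.1 ∉ x.2 ∧ x.2.card = n)).filter (fun x => ¬ Finset.Iio x.1 ⊆ x.2)).card := by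
    apply Finset.card_nbij' id id <;>
      (intro a ha; first
        | rfl
        | (simp only [Finset.coe_filter, Finset.mem_coe, Finset.mem_filter, Finset.mem_univ, true_and,
            id_eq] at ha ⊢; simp only [Set.mem_setOf_eq, GoodW] at ha ⊢; tauto))
  rw [cardA n] at hsplit
  rw [cardBad n] at hsplit
  rw [hGood]
  omega

def swapStep : Step → Step
  | Step.N => Step.E
  | Step.E => Step.N
  | Step.S => Step.W
  | Step.W => Step.S

lemma swapStep_invol : Function.Involutive swapStep := by
  intro a; cases a <;> rfl

lemma count_map_swap (w : List Step) (a : Step) :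
    (w.map swapStep).count a = w.count (swapStep a) := by
  conv_lhs => rw [← swapStep_invol a]
  exact List.count_map_of_injective w swapStep swapStep_invol.injective _

lemma PW_map_swap {n : ℕ} {w : List Step} (h : PS n w) : PW n (w.map swapStep) := by
  obtain ⟨hlen, hS, hW, hE, hpre⟩ := h
  refine ⟨by simpa using hlen, ?_, ?_, ?_, fun k => ?_⟩
  · rw [count_map_swap]; exact hS
  · rw [count_map_swap]; exact hW
  · rw [count_map_swap]; exact hE
  · rw [← List.map_take, count_map_swap, count_map_swap]
    exact hpre k

lemma PS_map_swap {n : ℕ} {w : List Step} (h : PW n w) : PS n (w.map swapStep) := by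
  obtain ⟨hlen, hW, hS, hN, hpre⟩ := h
  refine ⟨by simpa using hlen, ?_, ?_, ?_, fun k => ?_⟩
  · rw [count_map_swap]; exact hW
  · rw [count_map_swap]; exact hS
  · rw [count_map_swap]; exact hN
  · rw [← List.map_take, count_map_swap, count_map_swap]
    exact hpre k

def swapEquiv (n : ℕ) : {w : List Step // PW n w} ≃ {w : List Step // PS n w} where
  toFun x := ⟨x.1.map swapStep, PS_map_swap x.2⟩
  invFun x := ⟨x.1.map swapStep, PW_map_swap x.2⟩
  left_inv x := Subtype.ext (by simp [swapStep_invol.comp_self])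
  right_inv x := Subtype.ext (by simp [swapStep_invol.comp_self])

lemma card_PW (n : ℕ) : Nat.card {w : List Step // PW n w}
    = (n+1) * Nat.choose (2*n+2) (n+1) - Nat.choose (2*n+2) (n+2) := by
  rw [← Nat.card_eq_of_bijective (Phi n) (Phi_bijective n)]
  exact cardGoodW n

lemma finite_PW (n : ℕ) : Finite {w : List Step // PW n w} :=
  Finite.of_surjective (Phi n) (Phi_bijective n).surjective


/-- The number of lattice paths in `𝒫ₙ` is
`C(2n,n) · (4n+4)(2n+1) / (n+2)`. -/
theorem card_paths (n : ℕ) :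
    ({w : List Step | IsPath n w}.ncard : ℚ) =
      (Nat.choose (2 * n) n : ℚ) * ((4 * n + 4) * (2 * n + 1)) / (n + 2) := by
  classical
  have hset : {w : List Step | IsPath n w} = {w | PW n w ∨ PS n w} := by
    ext w; exact isPath_iff n w
  have hdisj : Disjoint (PW n) (PS n) := by
    rw [Pi.disjoint_iff]
    intro w
    rw [Prop.disjoint_iff]
    rintro ⟨h1, h2⟩
    exact absurd h1.2.1 (by rw [h2.2.2.1]; norm_num)
  haveI : Finite {w : List Step // PW n w} := finite_PW n
  haveI : Finite {w : List Step // PS n w} := Finite.of_equiv _ (swapEquiv n)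
  have hcard : {w : List Step | IsPath n w}.ncard
      = Nat.card {w : List Step // PW n w} + Nat.card {w : List Step // PS n w} := by
    rw [← Nat.card_coe_set_eq, hset]
    exact (Nat.card_congr (subtypeOrEquiv (PW n) (PS n) hdisj)).trans Nat.card_sum
  have hPS : Nat.card {w : List Step // PS n w} = Nat.card {w : List Step // PW n w} :=
    (Nat.card_congr (swapEquiv n)).symm
  rw [hcard, hPS, card_PW]
  -- arithmetic
  have e1 : Nat.choose (2*n+2) (n+2) * (n+2) = Nat.choose (2*n+2) (n+1) * (n+1) := by
    have h := Nat.choose_succ_right_eq (2*n+2) (n+1)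
    rw [show 2*n+2 - (n+1) = n+1 from by omega] at h
    exact h
  have h1 : (2*n+2) * Nat.choose (2*n+1) n = Nat.choose (2*n+2) (n+1) * (n+1) :=
    Nat.add_one_mul_choose_eq (2*n+1) n
  have h2 : (2*n+1) * Nat.choose (2*n) n = Nat.choose (2*n+1) (n+1) * (n+1) :=
    Nat.add_one_mul_choose_eq (2*n) n
  have h3 : Nat.choose (2*n+1) n = Nat.choose (2*n+1) (n+1) := by
    rw [← Nat.choose_symm (by omega : n ≤ 2*n+1)]
    congr 1
    omega
  have hle : Nat.choose (2*n+2) (n+2) ≤ (n+1) * Nat.choose (2*n+2) (n+1) := by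
    nlinarith [e1]
  push_cast [Nat.cast_sub hle]
  have e1' : ((2*n+2).choose (n+2) : ℚ) * (n+2) = ((2*n+2).choose (n+1) : ℚ) * (n+1) := by
    exact_mod_cast congrArg (Nat.cast : ℕ → ℚ) e1
  have h1' : ((2:ℚ)*n+2) * ((2*n+1).choose n : ℚ) = ((2*n+2).choose (n+1) : ℚ) * (n+1) := by
    exact_mod_cast congrArg (Nat.cast : ℕ → ℚ) h1
  have h2' : ((2:ℚ)*n+1) * ((2*n).choose n : ℚ) = ((2*n+1).choose (n+1) : ℚ) * (n+1) := by
    exact_mod_cast congrArg (Nat.cast : ℕ → ℚ) h2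
  have h3' : (((2*n+1).choose n : ℕ) : ℚ) = (((2*n+1).choose (n+1) : ℕ) : ℚ) := by
    exact_mod_cast congrArg (Nat.cast : ℕ → ℚ) h3
  have hn2 : (n : ℚ) + 2 ≠ 0 := by positivity
  field_simp
  linear_combination (-2 : ℚ)*e1' + (-2*((n:ℚ)+1))*h1' + (2*((n:ℚ)+1)*(2*(n:ℚ)+2))*h3'
    + (-4*((n:ℚ)+1))*h2'
end

section
/- For every n ≥ 0, the number of standard Young tableaux of shape θ^(n) = (n+2,2,1^n) equals C(2n,n)·(4n+4)(2n+1)/(n+2), where C(2n,n) is the central binomial coefficient. -/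
/-- `j`-th smallest element (0-indexed) of a finset of naturals. -/
def nth (A : Finset ℕ) (j : ℕ) : ℕ := (A.sort (· ≤ ·)).getD j 0

lemma nth_eq_orderEmb {A : Finset ℕ} {k j : ℕ} (h : A.card = k) (hj : j < k) :
    nth A j = A.orderEmbOfFin h ⟨j, hj⟩ := by
  rw [Finset.orderEmbOfFin_apply, nth, List.getD_eq_getElem _ _ (by simp [Finset.length_sort, h, hj]), Fin.getElem_fin]

lemma nth_mem {A : Finset ℕ} {j : ℕ} (hj : j < A.card) : nth A j ∈ A := by
  rw [nth_eq_orderEmb rfl hj]; exact Finset.orderEmbOfFin_mem A rfl _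

lemma nth_lt_nth {A : Finset ℕ} {i j : ℕ} (hij : i < j) (hj : j < A.card) :
    nth A i < nth A j := by
  rw [nth_eq_orderEmb rfl (hij.trans hj), nth_eq_orderEmb rfl hj]
  exact (A.orderEmbOfFin rfl).strictMono (by exact hij)

lemma exists_nth {A : Finset ℕ} {a : ℕ} (ha : a ∈ A) : ∃ j < A.card, nth A j = a := by
  have : a ∈ Set.range (A.orderEmbOfFin rfl) := by
    rw [Finset.range_orderEmbOfFin]; exact ha
  obtain ⟨⟨j, hj⟩, hja⟩ := this
  exact ⟨j, hj, by rw [nth_eq_orderEmb rfl hj, hja]⟩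

lemma nth_zero_le {A : Finset ℕ} {a : ℕ} (ha : a ∈ A) : nth A 0 ≤ a := by
  obtain ⟨j, hj, rfl⟩ := exists_nth ha
  rcases Nat.eq_zero_or_pos j with rfl | hp
  · exact le_refl _
  · exact le_of_lt (nth_lt_nth hp hj)

lemma nth_of_strictMono {A : Finset ℕ} {k : ℕ} {f : Fin k → ℕ} (hf : StrictMono f)
    (hfs : ∀ x, f x ∈ A) (hcard : A.card = k) {j : ℕ} (hj : j < k) :
    nth A j = f ⟨j, hj⟩ := by
  rw [nth_eq_orderEmb hcard hj, ← Finset.orderEmbOfFin_unique hcard hfs hf]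

def legSet (n : ℕ) (p : Finset ℕ × ℕ) : Finset ℕ :=
  (Finset.Icc 2 (2 * n + 4) \ p.1).erase p.2

def goodPair (n : ℕ) (p : Finset ℕ × ℕ) : Prop :=
  p.1 ⊆ Finset.Icc 2 (2 * n + 4) ∧ p.1.card = n + 1 ∧
  p.2 ∈ Finset.Icc 2 (2 * n + 4) ∧ p.2 ∉ p.1 ∧
  (∃ a ∈ p.1, a < p.2) ∧ (∃ b ∈ legSet n p, b < p.2)

noncomputable instance (n : ℕ) (p : Finset ℕ × ℕ) : Decidable (goodPair n p) :=
  Classical.dec _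

noncomputable def modelF (n : ℕ) : Finset (Finset ℕ × ℕ) :=
  (((Finset.Icc 2 (2 * n + 4)).powersetCard (n + 1) ×ˢ Finset.Icc 2 (2 * n + 4))).filter
    (goodPair n)

lemma mem_modelF {n : ℕ} {p : Finset ℕ × ℕ} : p ∈ modelF n ↔ goodPair n p := by
  constructor
  · exact fun h => (Finset.mem_filter.1 h).2
  · intro h
    refine Finset.mem_filter.2 ⟨Finset.mem_product.2 ⟨?_, h.2.2.1⟩, h⟩
    exact Finset.mem_powersetCard.2 ⟨h.1, h.2.1⟩

lemma legSet_subset {n : ℕ} {p : Finset ℕ × ℕ} : legSet n p ⊆ Finset.Icc 2 (2 * n + 4) :=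
  fun x hx => (Finset.mem_sdiff.1 (Finset.mem_of_mem_erase hx)).1

lemma mem_legSet {n : ℕ} {p : Finset ℕ × ℕ} {x : ℕ} :
    x ∈ legSet n p ↔ x ∈ Finset.Icc 2 (2 * n + 4) ∧ x ∉ p.1 ∧ x ≠ p.2 := by
  simp [legSet, Finset.mem_erase, Finset.mem_sdiff]; tauto

lemma card_legSet {n : ℕ} {p : Finset ℕ × ℕ} (hp : goodPair n p) :
    (legSet n p).card = n + 1 := by
  obtain ⟨hA, hcard, hh, hnh, -, -⟩ := hp
  have h1 : (Finset.Icc 2 (2 * n + 4) \ p.1).card = n + 2 := by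
    rw [Finset.card_sdiff_of_subset hA, hcard, Nat.card_Icc]; omega
  rw [legSet, Finset.card_erase_of_mem (Finset.mem_sdiff.2 ⟨hh, hnh⟩), h1]
  omega

lemma cover {n : ℕ} {p : Finset ℕ × ℕ} {x : ℕ} (hx : x ∈ Finset.Icc 2 (2 * n + 4)) :
    x ∈ p.1 ∨ x = p.2 ∨ x ∈ legSet n p := by
  by_cases h1 : x ∈ p.1
  · exact Or.inl h1
  by_cases h2 : x = p.2
  · exact Or.inr (Or.inl h2)
  exact Or.inr (Or.inr (mem_legSet.2 ⟨hx, h1, h2⟩))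

noncomputable def fromModel (n : ℕ) (p : Finset ℕ × ℕ) : ℕ × ℕ → ℕ := fun c =>
  if c.1 = 0 then
    (if c.2 = 0 then 1 else if c.2 ≤ n + 1 then nth p.1 (c.2 - 1) else 0)
  else if c = (1, 1) then p.2
  else if c.2 = 0 ∧ c.1 ≤ n + 1 then nth (legSet n p) (c.1 - 1)
  else 0

lemma fm_00 {n : ℕ} (p : Finset ℕ × ℕ) : fromModel n p (0, 0) = 1 := by
  simp [fromModel]

lemma fm_arm {n : ℕ} (p : Finset ℕ × ℕ) {j : ℕ} (h1 : 1 ≤ j) (h2 : j ≤ n + 1) :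
    fromModel n p (0, j) = nth p.1 (j - 1) := by
  simp only [fromModel]
  split_ifs with a b c d e <;> first | rfl | (exfalso; simp_all [Prod.ext_iff] <;> omega)

lemma fm_heart {n : ℕ} (p : Finset ℕ × ℕ) : fromModel n p (1, 1) = p.2 := by
  simp [fromModel]

lemma fm_leg {n : ℕ} (p : Finset ℕ × ℕ) {i : ℕ} (h1 : 1 ≤ i) (h2 : i ≤ n + 1) :
    fromModel n p (i, 0) = nth (legSet n p) (i - 1) := by
  simp only [fromModel]
  split_ifs with a b c d e <;> first | rfl | (exfalso; simp_all [Prod.ext_iff] <;> omega)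

lemma fm_zero {n : ℕ} (p : Finset ℕ × ℕ) {c : ℕ × ℕ} (hc : c ∉ cells n) :
    fromModel n p c = 0 := by
  obtain ⟨i, j⟩ := c
  simp only [cells, Set.mem_setOf_eq, Prod.ext_iff] at hc
  push_neg at hc
  simp only [fromModel]
  split_ifs with a b c d e <;> first | rfl | (exfalso; simp_all [Prod.ext_iff] <;> omega)

lemma arm_cell {n j : ℕ} (h : j ≤ n + 1) : ((0, j) : ℕ × ℕ) ∈ cells n := Or.inl ⟨rfl, h⟩
lemma heart_cell {n : ℕ} : ((1, 1) : ℕ × ℕ) ∈ cells n := Or.inr (Or.inl rfl)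
lemma leg_cell {n i : ℕ} (h1 : 1 ≤ i) (h2 : i ≤ n + 1) : ((i, 0) : ℕ × ℕ) ∈ cells n :=
  Or.inr (Or.inr ⟨rfl, h1, h2⟩)

lemma cell_cases {n : ℕ} {c : ℕ × ℕ} (hc : c ∈ cells n) :
    c = (0, 0) ∨ (∃ j, 1 ≤ j ∧ j ≤ n + 1 ∧ c = (0, j)) ∨ c = (1, 1) ∨
      (∃ i, 1 ≤ i ∧ i ≤ n + 1 ∧ c = (i, 0)) := by
  obtain ⟨i, j⟩ := c
  rcases hc with ⟨h1, h2⟩ | h | ⟨h1, h2, h3⟩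
  · simp only at h1 h2
    subst h1
    rcases Nat.eq_zero_or_pos j with rfl | hj
    · exact Or.inl rfl
    · exact Or.inr (Or.inl ⟨j, hj, h2, rfl⟩)
  · exact Or.inr (Or.inr (Or.inl h))
  · simp only at h1 h2 h3
    subst h1
    exact Or.inr (Or.inr (Or.inr ⟨i, h2, h3, rfl⟩))

lemma isSYT_fromModel {n : ℕ} {p : Finset ℕ × ℕ} (hp : goodPair n p) :
    IsSYT n (fromModel n p) := by
  obtain ⟨hA, hcA, hh, hnh, ⟨a, haA, hah⟩, ⟨b, hbL, hbh⟩⟩ := hp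
  have hcL : (legSet n p).card = n + 1 := card_legSet ⟨hA, hcA, hh, hnh, ⟨a, haA, hah⟩, ⟨b, hbL, hbh⟩⟩
  have hh2 : 2 ≤ p.2 ∧ p.2 ≤ 2 * n + 4 := Finset.mem_Icc.1 hh
  have armB : ∀ j ≤ n, 2 ≤ nth p.1 j ∧ nth p.1 j ≤ 2 * n + 4 := fun j hj =>
    Finset.mem_Icc.1 (hA (nth_mem (by omega)))
  have legB : ∀ i ≤ n, 2 ≤ nth (legSet n p) i ∧ nth (legSet n p) i ≤ 2 * n + 4 := fun i hi =>
    Finset.mem_Icc.1 (legSet_subset (nth_mem (by omega)))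
  have armM : ∀ j ≤ n, nth p.1 j ∈ p.1 := fun j hj => nth_mem (by omega)
  have legM : ∀ i ≤ n, nth (legSet n p) i ∈ legSet n p := fun i hi => nth_mem (by omega)
  refine ⟨fun c hc => fm_zero p hc, ⟨?_, ?_, ?_⟩, ?_, ?_⟩
  · -- MapsTo
    intro c hc
    rcases cell_cases hc with rfl | ⟨j, hj1, hj2, rfl⟩ | rfl | ⟨i, hi1, hi2, rfl⟩
    · rw [fm_00]; exact ⟨le_refl 1, by omega⟩
    · rw [fm_arm p hj1 hj2]
      have := armB (j - 1) (by omega)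
      exact ⟨by omega, by omega⟩
    · rw [fm_heart]; exact ⟨by omega, by omega⟩
    · rw [fm_leg p hi1 hi2]
      have := legB (i - 1) (by omega)
      exact ⟨by omega, by omega⟩
  · -- InjOn
    intro c hc d hd he
    have nthA_inj : ∀ j j', j ≤ n → j' ≤ n → nth p.1 j = nth p.1 j' → j = j' := by
      intro j j' hj hj' hjj
      by_contra hne
      rcases Nat.lt_or_ge j j' with hlt | hge
      · exact absurd hjj (Nat.ne_of_lt (nth_lt_nth hlt (by omega)))
      · have : j' < j := by omega
        exact absurd hjj.symm (Nat.ne_of_lt (nth_lt_nth this (by omega)))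
    have nthL_inj : ∀ i i', i ≤ n → i' ≤ n → nth (legSet n p) i = nth (legSet n p) i' → i = i' := by
      intro j j' hj hj' hjj
      by_contra hne
      rcases Nat.lt_or_ge j j' with hlt | hge
      · exact absurd hjj (Nat.ne_of_lt (nth_lt_nth hlt (by omega)))
      · have : j' < j := by omega
        exact absurd hjj.symm (Nat.ne_of_lt (nth_lt_nth this (by omega)))
    rcases cell_cases hc with rfl | ⟨j, hj1, hj2, rfl⟩ | rfl | ⟨i, hi1, hi2, rfl⟩ <;>
      rcases cell_cases hd with rfl | ⟨j', hj1', hj2', rfl⟩ | rfl | ⟨i', hi1', hi2', rfl⟩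
    · rfl
    · rw [fm_00, fm_arm p hj1' hj2'] at he
      exact absurd he.symm (by have := armB (j' - 1) (by omega); omega)
    · rw [fm_00, fm_heart] at he
      exact absurd he.symm (by omega)
    · rw [fm_00, fm_leg p hi1' hi2'] at he
      exact absurd he.symm (by have := legB (i' - 1) (by omega); omega)
    · rw [fm_arm p hj1 hj2, fm_00] at he
      exact absurd he (by have := armB (j - 1) (by omega); omega)
    · rw [fm_arm p hj1 hj2, fm_arm p hj1' hj2'] at he
      have h9 := nthA_inj (j - 1) (j' - 1) (by omega) (by omega) he
      have : j = j' := by omega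
      rw [this]
    · rw [fm_arm p hj1 hj2, fm_heart] at he
      exact absurd (he ▸ armM (j - 1) (by omega)) hnh
    · rw [fm_arm p hj1 hj2, fm_leg p hi1' hi2'] at he
      have h1 := armM (j - 1) (by omega)
      have h2 := (mem_legSet.1 (legM (i' - 1) (by omega))).2.1
      rw [he] at h1
      exact absurd h1 h2
    · rw [fm_heart, fm_00] at he
      exact absurd he (by omega)
    · rw [fm_heart, fm_arm p hj1' hj2'] at he
      exact absurd (he.symm ▸ armM (j' - 1) (by omega)) hnh
    · rfl
    · rw [fm_heart, fm_leg p hi1' hi2'] at he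
      exact absurd he.symm (mem_legSet.1 (legM (i' - 1) (by omega))).2.2
    · rw [fm_leg p hi1 hi2, fm_00] at he
      exact absurd he (by have := legB (i - 1) (by omega); omega)
    · rw [fm_leg p hi1 hi2, fm_arm p hj1' hj2'] at he
      have h1 := armM (j' - 1) (by omega)
      have h2 := (mem_legSet.1 (legM (i - 1) (by omega))).2.1
      rw [← he] at h1
      exact absurd h1 h2
    · rw [fm_leg p hi1 hi2, fm_heart] at he
      exact absurd he (mem_legSet.1 (legM (i - 1) (by omega))).2.2
    · rw [fm_leg p hi1 hi2, fm_leg p hi1' hi2'] at he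
      have h9 := nthL_inj (i - 1) (i' - 1) (by omega) (by omega) he
      have : i = i' := by omega
      rw [this]
  · -- SurjOn
    intro m hm
    rcases Nat.eq_or_lt_of_le hm.1 with h1 | h1
    · exact ⟨(0, 0), arm_cell (by omega), by rw [fm_00, h1]⟩
    have hm2 : m ∈ Finset.Icc 2 (2 * n + 4) := Finset.mem_Icc.2 ⟨by omega, hm.2⟩
    rcases cover (p := p) hm2 with hmA | hmh | hmL
    · obtain ⟨j, hj, hjm⟩ := exists_nth hmA
      refine ⟨(0, j + 1), arm_cell (by omega), ?_⟩
      rw [fm_arm p (by omega) (by omega)]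
      simpa using hjm
    · exact ⟨(1, 1), heart_cell, by rw [fm_heart, hmh]⟩
    · obtain ⟨i, hi, him⟩ := exists_nth hmL
      refine ⟨(i + 1, 0), leg_cell (by omega) (by omega), ?_⟩
      rw [fm_leg p (by omega) (by omega)]
      simpa using him
  · -- rows
    intro c hc d hd hrow hcol
    rcases cell_cases hc with rfl | ⟨j, hj1, hj2, rfl⟩ | rfl | ⟨i, hi1, hi2, rfl⟩ <;>
        rcases cell_cases hd with rfl | ⟨j', hj1', hj2', rfl⟩ | rfl | ⟨i', hi1', hi2', rfl⟩ <;>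
        simp only at hrow hcol
    · omega
    · rw [fm_00, fm_arm p hj1' hj2']
      have := armB (j' - 1) (by omega)
      omega
    · omega
    · omega
    · omega
    · rw [fm_arm p hj1 hj2, fm_arm p hj1' hj2']
      exact nth_lt_nth (by omega) (by omega)
    · omega
    · omega
    · omega
    · omega
    · omega
    · omega
    · omega
    · omega
    · -- (i,0) to (1,1) with i = 1
      rw [fm_leg p hi1 hi2, fm_heart]
      have h0 : nth (legSet n p) 0 ≤ b := nth_zero_le hbL
      have h9 : nth (legSet n p) (i - 1) = nth (legSet n p) 0 := by
        congr 1
        omega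
      omega
    · omega
  · -- cols
    intro c hc d hd hcol hrow
    rcases cell_cases hc with rfl | ⟨j, hj1, hj2, rfl⟩ | rfl | ⟨i, hi1, hi2, rfl⟩ <;>
        rcases cell_cases hd with rfl | ⟨j', hj1', hj2', rfl⟩ | rfl | ⟨i', hi1', hi2', rfl⟩ <;>
        simp only at hrow hcol
    · omega
    · omega
    · rw [fm_00, fm_heart]
      omega
    · rw [fm_00, fm_leg p hi1' hi2']
      have := legB (i' - 1) (by omega)
      omega
    · omega
    · omega
    · -- (0,j) to (1,1) with j = 1
      rw [fm_arm p hj1 hj2, fm_heart]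
      have h0 : nth p.1 0 ≤ a := nth_zero_le haA
      have h9 : nth p.1 (j - 1) = nth p.1 0 := by
        congr 1
        omega
      omega
    · omega
    · omega
    · omega
    · omega
    · omega
    · omega
    · omega
    · omega
    · rw [fm_leg p hi1 hi2, fm_leg p hi1' hi2']
      exact nth_lt_nth (by omega) (by omega)

lemma injOn_fromModel {n : ℕ} {p q : Finset ℕ × ℕ} (hp : goodPair n p) (hq : goodPair n q)
    (he : fromModel n p = fromModel n q) : p = q := by
  have h2 : p.2 = q.2 := by
    have := congrFun he (1, 1)
    rwa [fm_heart, fm_heart] at this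
  have h1 : p.1 = q.1 := by
    ext x
    constructor
    · intro hx
      obtain ⟨j, hj, rfl⟩ := exists_nth hx
      rw [hp.2.1] at hj
      have e1 : fromModel n p (0, j + 1) = nth p.1 j := by
        rw [fm_arm p (by omega) (by omega)]; simp
      have e2 : fromModel n q (0, j + 1) = nth q.1 j := by
        rw [fm_arm q (by omega) (by omega)]; simp
      rw [← e1, he, e2]
      exact nth_mem (by rw [hq.2.1]; omega)
    · intro hx
      obtain ⟨j, hj, rfl⟩ := exists_nth hx
      rw [hq.2.1] at hj
      have e1 : fromModel n p (0, j + 1) = nth p.1 j := by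
        rw [fm_arm p (by omega) (by omega)]; simp
      have e2 : fromModel n q (0, j + 1) = nth q.1 j := by
        rw [fm_arm q (by omega) (by omega)]; simp
      rw [← e2, ← he, e1]
      exact nth_mem (by rw [hp.2.1]; omega)
  exact Prod.ext h1 h2

lemma syt_eq_fromModel {n : ℕ} {T : ℕ × ℕ → ℕ} (hT : IsSYT n T) :
    ∃ p, goodPair n p ∧ fromModel n p = T := by
  obtain ⟨hz, ⟨hmap, hinj, hsurj⟩, hrowT, hcolT⟩ := hT
  -- T (0,0) = 1
  have hmin : ∀ c ∈ cells n, T (0, 0) ≤ T c := by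
    intro c hc
    rcases cell_cases hc with rfl | ⟨j, hj1, hj2, rfl⟩ | rfl | ⟨i, hi1, hi2, rfl⟩
    · exact le_refl _
    · exact (hrowT (0, 0) (arm_cell (by omega)) (0, j) (arm_cell hj2) rfl (by omega)).le
    · have s1 : T (0, 1) < T (1, 1) :=
        hcolT (0, 1) (arm_cell (by omega)) (1, 1) heart_cell rfl (by omega)
      have s0 : T (0, 0) < T (0, 1) :=
        hrowT (0, 0) (arm_cell (by omega)) (0, 1) (arm_cell (by omega)) rfl (by omega)
      omega
    · exact (hcolT (0, 0) (arm_cell (by omega)) (i, 0) (leg_cell hi1 hi2) rfl (by omega)).le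
  have T00 : T (0, 0) = 1 := by
    obtain ⟨c, hc, hc1⟩ := hsurj (Set.mem_Icc.2 ⟨le_refl 1, by omega⟩)
    have := hmin c hc
    have := (hmap (arm_cell (n := n) (by omega) : ((0,0) : ℕ×ℕ) ∈ cells n)).1
    omega
  -- the arm map
  set g : Fin (n + 1) → ℕ := fun x => T (0, x.1 + 1) with hg
  have hgmono : StrictMono g := by
    intro x y hxy
    exact hrowT (0, x.1 + 1) (arm_cell (by omega)) (0, y.1 + 1) (arm_cell (by omega)) rfl
      (by simpa using hxy)
  set A : Finset ℕ := Finset.univ.image g with hAdef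
  have hgA : ∀ x, g x ∈ A := fun x => Finset.mem_image.2 ⟨x, Finset.mem_univ x, rfl⟩
  have hcA : A.card = n + 1 := by
    rw [hAdef, Finset.card_image_of_injective _ hgmono.injective, Finset.card_univ,
      Fintype.card_fin]
  set h : ℕ := T (1, 1) with hhdef
  -- the leg map
  set gL : Fin (n + 1) → ℕ := fun x => T (x.1 + 1, 0) with hgL
  have hgLmono : StrictMono gL := by
    intro x y hxy
    exact hcolT (x.1 + 1, 0) (leg_cell (by omega) (by omega)) (y.1 + 1, 0)
      (leg_cell (by omega) (by omega)) rfl (by simpa using hxy)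
  set Lv : Finset ℕ := Finset.univ.image gL with hLdef
  have hgLv : ∀ x, gL x ∈ Lv := fun x => Finset.mem_image.2 ⟨x, Finset.mem_univ x, rfl⟩
  have hcLv : Lv.card = n + 1 := by
    rw [hLdef, Finset.card_image_of_injective _ hgLmono.injective, Finset.card_univ,
      Fintype.card_fin]
  -- bounds
  have hgB : ∀ x : Fin (n + 1), 2 ≤ g x ∧ g x ≤ 2 * n + 4 := by
    intro x
    have h1 := hmap (arm_cell (n := n) (j := x.1 + 1) (by omega))
    have h2 : T (0, 0) < g x :=
      hrowT (0, 0) (arm_cell (by omega)) (0, x.1 + 1) (arm_cell (by omega)) rfl (by omega)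
    exact ⟨by omega, h1.2⟩
  have hgLB : ∀ x : Fin (n + 1), 2 ≤ gL x ∧ gL x ≤ 2 * n + 4 := by
    intro x
    have h1 := hmap (leg_cell (n := n) (i := x.1 + 1) (by omega) (by omega))
    have h2 : T (0, 0) < gL x :=
      hcolT (0, 0) (arm_cell (by omega)) (x.1 + 1, 0) (leg_cell (by omega) (by omega)) rfl
        (by omega)
    exact ⟨by omega, h1.2⟩
  have hAsub : A ⊆ Finset.Icc 2 (2 * n + 4) := by
    intro x hx
    obtain ⟨y, -, rfl⟩ := Finset.mem_image.1 hx
    exact Finset.mem_Icc.2 (hgB y)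
  have hhIcc : h ∈ Finset.Icc 2 (2 * n + 4) := by
    have h1 := hmap (heart_cell (n := n))
    have h2 : T (0, 1) < h := hcolT (0, 1) (arm_cell (by omega)) (1, 1) heart_cell rfl (by omega)
    have h3 := hgB ⟨0, by omega⟩
    simp only [hg] at h3
    norm_num at h3
    exact Finset.mem_Icc.2 ⟨by omega, h1.2⟩
  have hinj' : ∀ c ∈ cells n, ∀ d ∈ cells n, T c = T d → c = d := fun c hc d hd he =>
    hinj hc hd he
  have hhA : h ∉ A := by
    intro hx
    obtain ⟨y, -, hy⟩ := Finset.mem_image.1 hx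
    have := hinj' _ (arm_cell (n := n) (j := y.1 + 1) (by omega)) _ heart_cell hy
    simp [Prod.ext_iff] at this
  -- legSet equals Lv
  have hleg : legSet n (A, h) = Lv := by
    ext x
    rw [mem_legSet]
    constructor
    · rintro ⟨hx1, hx2, hx3⟩
      have hx1' : x ∈ Set.Icc 1 (2 * n + 4) := by
        have := Finset.mem_Icc.1 hx1
        exact Set.mem_Icc.2 ⟨by omega, this.2⟩
      obtain ⟨c, hc, rfl⟩ := hsurj hx1'
      rcases cell_cases hc with rfl | ⟨j, hj1, hj2, rfl⟩ | rfl | ⟨i, hi1, hi2, rfl⟩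
      · rw [T00] at hx1
        have := Finset.mem_Icc.1 hx1
        omega
      · exact absurd (hgA ⟨j - 1, by omega⟩) (by simpa [hg, show j - 1 + 1 = j by omega] using hx2)
      · exact absurd rfl hx3
      · have := hgLv ⟨i - 1, by omega⟩
        simpa [hgL, show i - 1 + 1 = i by omega] using this
    · intro hx
      obtain ⟨y, -, rfl⟩ := Finset.mem_image.1 hx
      refine ⟨Finset.mem_Icc.2 (hgLB y), ?_, ?_⟩
      · intro hmem
        obtain ⟨z, -, hz'⟩ := Finset.mem_image.1 hmem
        have := hinj' _ (arm_cell (n := n) (j := z.1 + 1) (by omega)) _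
          (leg_cell (n := n) (i := y.1 + 1) (by omega) (by omega)) hz'
        simp [Prod.ext_iff] at this
      · intro hEq
        have := hinj' _ (leg_cell (n := n) (i := y.1 + 1) (by omega) (by omega)) _ heart_cell hEq
        simp [Prod.ext_iff] at this
  have hgood : goodPair n (A, h) := by
    refine ⟨hAsub, hcA, hhIcc, hhA, ⟨g ⟨0, by omega⟩, hgA _, ?_⟩,
      ⟨gL ⟨0, by omega⟩, by rw [hleg]; exact hgLv _, ?_⟩⟩
    · exact hcolT (0, 1) (arm_cell (by omega)) (1, 1) heart_cell rfl (by omega)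
    · exact hrowT (1, 0) (leg_cell (by omega) (by omega)) (1, 1) heart_cell rfl (by omega)
  refine ⟨(A, h), hgood, ?_⟩
  funext c
  by_cases hc : c ∈ cells n
  · rcases cell_cases hc with rfl | ⟨j, hj1, hj2, rfl⟩ | rfl | ⟨i, hi1, hi2, rfl⟩
    · rw [fm_00, T00]
    · rw [fm_arm _ hj1 hj2]
      have := nth_of_strictMono hgmono hgA hcA (j := j - 1) (by omega)
      rw [this]
      simp only [hg]
      congr 1
      simp [Prod.ext_iff]
      omega
    · rw [fm_heart]
    · rw [fm_leg _ hi1 hi2]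
      have hcL2 : (legSet n (A, h)).card = n + 1 := by rw [hleg]; exact hcLv
      have := nth_of_strictMono (A := legSet n (A, h)) (f := gL) hgLmono
        (by rw [hleg]; exact hgLv) hcL2 (j := i - 1) (by omega)
      rw [this]
      simp only [hgL]
      congr 1
      simp [Prod.ext_iff]
      omega
  · rw [fm_zero _ hc, hz _ hc]

lemma ncard_syt_eq (n : ℕ) : {T : ℕ × ℕ → ℕ | IsSYT n T}.ncard = (modelF n).card := by
  have hbij : Set.BijOn (fromModel n) ↑(modelF n) {T : ℕ × ℕ → ℕ | IsSYT n T} := by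
    refine ⟨fun p hp => isSYT_fromModel (mem_modelF.1 hp), ?_, ?_⟩
    · intro p hp q hq he
      exact injOn_fromModel (mem_modelF.1 hp) (mem_modelF.1 hq) he
    · intro T hT
      obtain ⟨p, hgood, hfm⟩ := syt_eq_fromModel hT
      exact ⟨p, mem_modelF.2 hgood, hfm⟩
  rw [← hbij.image_eq, Set.ncard_image_of_injOn hbij.injOn, Set.ncard_coe_finset]

lemma per_h_count (n h : ℕ) (hh : h ∈ Finset.Icc 2 (2 * n + 4)) :
    (((Finset.Icc 2 (2 * n + 4)).powersetCard (n + 1)).filter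
      (fun A => goodPair n (A, h))).card + 2 * Nat.choose (2 * n + 4 - h) (n + 1) =
    Nat.choose (2 * n + 2) (n + 1) +
      (if h = 2 then Nat.choose (2 * n + 2) (n + 1) else 0) := by
  classical
  rw [Finset.mem_Icc] at hh
  set H := Finset.Icc 2 (2 * n + 4) with hH
  set S := H.erase h with hS
  have hhH : h ∈ H := Finset.mem_Icc.2 hh
  have hcardH : H.card = 2 * n + 3 := by rw [hH, Nat.card_Icc]; omega
  have hcardS : S.card = 2 * n + 2 := by
    rw [hS, Finset.card_erase_of_mem hhH, hcardH]
    omega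
  have hmemS : ∀ x, x ∈ S ↔ (2 ≤ x ∧ x ≤ 2 * n + 4 ∧ x ≠ h) := by
    intro x
    rw [hS, Finset.mem_erase, hH, Finset.mem_Icc]
    tauto
  set Q := S.powersetCard (n + 1) with hQ
  have hcardQ : Q.card = Nat.choose (2 * n + 2) (n + 1) := by
    rw [hQ, Finset.card_powersetCard, hcardS]
  -- rewrite the filter over the smaller ground set
  have hfeq : ((H.powersetCard (n + 1)).filter (fun A => goodPair n (A, h))) =
      Q.filter (fun A => (∃ a ∈ A, a < h) ∧ ∃ b ∈ S \ A, b < h) := by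
    ext A
    rw [Finset.mem_filter, Finset.mem_filter]
    simp only [Finset.mem_powersetCard, hQ, goodPair]
    constructor
    · rintro ⟨⟨hAH, hcA⟩, -, -, -, hnA, ha, b, hb, hbh⟩
      rw [mem_legSet] at hb
      refine ⟨⟨fun x hx => ?_, hcA⟩, ha, ⟨b, ?_, hbh⟩⟩
      · rw [hS, Finset.mem_erase]
        exact ⟨fun hxh => hnA (hxh ▸ hx), hAH hx⟩
      · rw [Finset.mem_sdiff, hmemS]
        have h1 := Finset.mem_Icc.1 hb.1
        exact ⟨⟨h1.1, h1.2, hb.2.2⟩, hb.2.1⟩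
    · rintro ⟨⟨hAS, hcA⟩, ha, b, hb, hbh⟩
      rw [Finset.mem_sdiff] at hb
      have hb1 := (hmemS b).1 hb.1
      have hAH : A ⊆ H := fun x hx => Finset.mem_of_mem_erase (hAS hx)
      have hnA : h ∉ A := fun hx => ((hmemS h).1 (hAS hx)).2.2 rfl
      refine ⟨⟨hAH, hcA⟩, hAH, hcA, hhH, hnA, ha, ⟨b, ?_, hbh⟩⟩
      rw [mem_legSet]
      exact ⟨Finset.mem_Icc.2 ⟨hb1.1, hb1.2.1⟩, hb.2, hb1.2.2⟩
  rw [hfeq]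
  set P1 : Finset ℕ → Prop := fun A => ∀ a ∈ A, h ≤ a with hP1
  set P2 : Finset ℕ → Prop := fun A => ∀ b ∈ S \ A, h ≤ b with hP2
  have hnot : ∀ A, (¬ ((∃ a ∈ A, a < h) ∧ ∃ b ∈ S \ A, b < h)) ↔ (P1 A ∨ P2 A) := by
    intro A
    rw [hP1, hP2]
    constructor
    · intro hAB
      by_cases h1 : ∀ a ∈ A, h ≤ a
      · exact Or.inl h1
      · right
        intro b hb
        by_contra hbh
        push_neg at h1 hbh
        obtain ⟨a, ha, hah⟩ := h1
        exact hAB ⟨⟨a, ha, by omega⟩, ⟨b, hb, by omega⟩⟩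
    · rintro (h1 | h2) ⟨⟨a, ha, hah⟩, ⟨b, hb, hbh⟩⟩
      · exact absurd (h1 a ha) (by omega)
      · exact absurd (h2 b hb) (by omega)
  have key1 : (Q.filter (fun A => (∃ a ∈ A, a < h) ∧ ∃ b ∈ S \ A, b < h)).card +
      (Q.filter (fun A => P1 A ∨ P2 A)).card = Q.card := by
    have heq : Q.filter (fun A => ¬((∃ a ∈ A, a < h) ∧ ∃ b ∈ S \ A, b < h)) =
        Q.filter (fun A => P1 A ∨ P2 A) :=
      Finset.filter_congr (fun A _ => by rw [hnot A])
    rw [← heq]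
    exact Finset.card_filter_add_card_filter_not _
  have key2 : (Q.filter (fun A => P1 A ∨ P2 A)).card +
      (Q.filter (fun A => P1 A ∧ P2 A)).card =
      (Q.filter P1).card + (Q.filter P2).card := by
    rw [Finset.filter_or, Finset.filter_and]
    exact Finset.card_union_add_card_inter _ _
  have hc1 : (Q.filter P1).card = Nat.choose (2 * n + 4 - h) (n + 1) := by
    have : Q.filter P1 = (Finset.Icc (h + 1) (2 * n + 4)).powersetCard (n + 1) := by
      ext A
      simp only [Finset.mem_filter, hQ, Finset.mem_powersetCard, hP1]
      constructor
      · rintro ⟨⟨hAS, hcA⟩, hall⟩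
        refine ⟨fun x hx => ?_, hcA⟩
        have h1 := (hmemS x).1 (hAS hx)
        have h2 := hall x hx
        rw [Finset.mem_Icc]
        omega
      · rintro ⟨hsub, hcA⟩
        refine ⟨⟨fun x hx => ?_, hcA⟩, fun a ha => ?_⟩
        · have := Finset.mem_Icc.1 (hsub hx)
          rw [hmemS]
          omega
        · have := Finset.mem_Icc.1 (hsub ha)
          omega
    rw [this, Finset.card_powersetCard, Nat.card_Icc]
    have he9 : 2 * n + 4 + 1 - (h + 1) = 2 * n + 4 - h := by omega
    rw [he9]
  have hc2 : (Q.filter P2).card = (Q.filter P1).card := by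
    apply Finset.card_bij' (fun A _ => S \ A) (fun B _ => S \ B)
    · intro A hA
      rw [Finset.mem_filter] at hA ⊢
      obtain ⟨hAQ, hA2⟩ := hA
      rw [hQ, Finset.mem_powersetCard] at hAQ ⊢
      refine ⟨⟨Finset.sdiff_subset, ?_⟩, fun a ha => hA2 a ha⟩
      rw [Finset.card_sdiff_of_subset hAQ.1, hcardS, hAQ.2]
      omega
    · intro B hB
      rw [Finset.mem_filter] at hB ⊢
      obtain ⟨hBQ, hB2⟩ := hB
      rw [hQ, Finset.mem_powersetCard] at hBQ ⊢
      refine ⟨⟨Finset.sdiff_subset, ?_⟩, fun b hb => ?_⟩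
      · rw [Finset.card_sdiff_of_subset hBQ.1, hcardS, hBQ.2]
        omega
      · rw [Finset.sdiff_sdiff_eq_self hBQ.1] at hb
        exact hB2 b hb
    · intro A hA
      rw [Finset.mem_filter, hQ, Finset.mem_powersetCard] at hA
      exact Finset.sdiff_sdiff_eq_self hA.1.1
    · intro B hB
      rw [Finset.mem_filter, hQ, Finset.mem_powersetCard] at hB
      exact Finset.sdiff_sdiff_eq_self hB.1.1
  have hc12 : (Q.filter (fun A => P1 A ∧ P2 A)).card =
      (if h = 2 then Nat.choose (2 * n + 2) (n + 1) else 0) := by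
    by_cases h2 : h = 2
    · subst h2
      rw [if_pos rfl, ← hcardQ]
      congr 1
      apply Finset.filter_true_of_mem
      intro A hA
      rw [hQ, Finset.mem_powersetCard] at hA
      constructor
      · intro a ha
        exact ((hmemS a).1 (hA.1 ha)).1
      · intro b hb
        exact ((hmemS b).1 (Finset.mem_sdiff.1 hb).1).1
    · rw [if_neg h2]
      rw [Finset.card_eq_zero]
      apply Finset.filter_false_of_mem
      intro A hA hcontra
      rw [hQ, Finset.mem_powersetCard] at hA
      have h2S : (2 : ℕ) ∈ S := by
        rw [hmemS]
        exact ⟨le_refl 2, by omega, fun hc => h2 hc.symm⟩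
      by_cases h2A : 2 ∈ A
      · have := hcontra.1 2 h2A
        omega
      · have := hcontra.2 2 (Finset.mem_sdiff.2 ⟨h2S, h2A⟩)
        omega
  rw [hc2, hc1] at key2
  rw [hcardQ] at key1
  by_cases h2 : h = 2
  · rw [if_pos h2] at hc12 ⊢
    omega
  · rw [if_neg h2] at hc12 ⊢
    omega
lemma card_modelF (n : ℕ) :
    (modelF n).card + 2 * Nat.choose (2 * n + 3) (n + 2) =
      (2 * n + 4) * Nat.choose (2 * n + 2) (n + 1) := by
  classical
  set H := Finset.Icc 2 (2 * n + 4) with hH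
  have hsplit : modelF n = H.biUnion (fun h =>
      ((H.powersetCard (n + 1)).filter (fun A => goodPair n (A, h))).image
        (fun A => (A, h))) := by
    ext ⟨A, h⟩
    constructor
    · intro hp
      have hg := mem_modelF.1 hp
      exact Finset.mem_biUnion.2 ⟨h, hg.2.2.1, Finset.mem_image.2
        ⟨A, Finset.mem_filter.2 ⟨Finset.mem_powersetCard.2 ⟨hg.1, hg.2.1⟩, hg⟩, rfl⟩⟩
    · intro hp
      obtain ⟨h', hh', hmem⟩ := Finset.mem_biUnion.1 hp
      obtain ⟨A', hA', heq⟩ := Finset.mem_image.1 hmem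
      obtain ⟨rfl, rfl⟩ : A' = A ∧ h' = h := by
        simpa [Prod.ext_iff] using heq
      exact mem_modelF.2 (Finset.mem_filter.1 hA').2
  have hcard : (modelF n).card =
      ∑ h ∈ H, ((H.powersetCard (n + 1)).filter (fun A => goodPair n (A, h))).card := by
    rw [hsplit, Finset.card_biUnion]
    · apply Finset.sum_congr rfl
      intro h _
      exact Finset.card_image_of_injective _ (fun a b hab => (Prod.ext_iff.1 hab).1)
    · intro x hx y hy hxy
      rw [Function.onFun, Finset.disjoint_left]
      intro p hp1 hp2
      obtain ⟨A1, -, he1⟩ := Finset.mem_image.1 hp1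
      obtain ⟨A2, -, he2⟩ := Finset.mem_image.1 hp2
      apply hxy
      rw [← he1] at he2
      exact ((Prod.ext_iff.1 he2).2).symm
  have hsum : ∑ h ∈ H,
      (((H.powersetCard (n + 1)).filter (fun A => goodPair n (A, h))).card
        + 2 * Nat.choose (2 * n + 4 - h) (n + 1)) =
      ∑ h ∈ H, (Nat.choose (2 * n + 2) (n + 1) +
        (if h = 2 then Nat.choose (2 * n + 2) (n + 1) else 0)) :=
    Finset.sum_congr rfl (fun h hh => per_h_count n h hh)
  rw [Finset.sum_add_distrib, Finset.sum_add_distrib, ← Finset.mul_sum] at hsum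
  have hg : ∑ h ∈ H, Nat.choose (2 * n + 4 - h) (n + 1) =
      Nat.choose (2 * n + 3) (n + 2) := by
    have h1 : ∑ h ∈ H, Nat.choose (2 * n + 4 - h) (n + 1) =
        ∑ m ∈ Finset.Icc 0 (2 * n + 2), Nat.choose m (n + 1) := by
      apply Finset.sum_nbij' (i := fun h => 2 * n + 4 - h) (j := fun m => 2 * n + 4 - m)
      · intro a ha
        rw [hH, Finset.mem_Icc] at ha
        rw [Finset.mem_Icc]
        omega
      · intro m hm
        rw [Finset.mem_Icc] at hm
        rw [hH, Finset.mem_Icc]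
        omega
      · intro a ha
        rw [hH, Finset.mem_Icc] at ha
        omega
      · intro m hm
        rw [Finset.mem_Icc] at hm
        omega
      · intro a _
        rfl
    rw [h1]
    have h2 : ∑ m ∈ Finset.Icc 0 (2 * n + 2), Nat.choose m (n + 1) =
        ∑ m ∈ Finset.Icc (n + 1) (2 * n + 2), Nat.choose m (n + 1) := by
      symm
      apply Finset.sum_subset
      · intro m hm
        rw [Finset.mem_Icc] at hm ⊢
        omega
      · intro m hm1 hm2
        rw [Finset.mem_Icc] at hm1 hm2
        exact Nat.choose_eq_zero_of_lt (by omega)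
    rw [h2, Nat.sum_Icc_choose]
  have hconst : ∑ _h ∈ H, Nat.choose (2 * n + 2) (n + 1) =
      (2 * n + 3) * Nat.choose (2 * n + 2) (n + 1) := by
    have hc9 : H.card = 2 * n + 3 := by rw [hH, Nat.card_Icc]; omega
    rw [Finset.sum_const, hc9, smul_eq_mul]
  have hite : ∑ h ∈ H, (if h = 2 then Nat.choose (2 * n + 2) (n + 1) else 0) =
      Nat.choose (2 * n + 2) (n + 1) := by
    rw [Finset.sum_ite_eq' H 2 (fun _ => Nat.choose (2 * n + 2) (n + 1)),
      if_pos (by rw [hH, Finset.mem_Icc]; omega)]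
  rw [hcard, ← hg, hsum, hconst, hite]
  ring

/-- The number of standard Young tableaux of shape `θ⁽ⁿ⁾ = (n+2,2,1ⁿ)` is
`C(2n,n) · (4n+4)(2n+1) / (n+2)`. -/
theorem card_syt (n : ℕ) :
    ({T : ℕ × ℕ → ℕ | IsSYT n T}.ncard : ℚ) =
      (Nat.choose (2 * n) n : ℚ) * ((4 * n + 4) * (2 * n + 1)) / (n + 2) := by
  rw [ncard_syt_eq n]
  have e0 : ((modelF n).card : ℚ) + 2 * (Nat.choose (2 * n + 3) (n + 2) : ℚ) =
      (2 * (n : ℚ) + 4) * (Nat.choose (2 * n + 2) (n + 1) : ℚ) := by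
    exact_mod_cast congrArg (Nat.cast (R := ℚ)) (card_modelF n)
  have r1 : (2 * (n : ℚ) + 3) * (Nat.choose (2 * n + 2) (n + 1) : ℚ) =
      (Nat.choose (2 * n + 3) (n + 2) : ℚ) * ((n : ℚ) + 2) := by
    have h0 : (2 * n + 3) * Nat.choose (2 * n + 2) (n + 1) =
        Nat.choose (2 * n + 3) (n + 2) * (n + 2) := Nat.add_one_mul_choose_eq (2 * n + 2) (n + 1)
    exact_mod_cast congrArg (Nat.cast (R := ℚ)) h0
  have r2 : (2 * (n : ℚ) + 2) * (Nat.choose (2 * n + 1) n : ℚ) =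
      (Nat.choose (2 * n + 2) (n + 1) : ℚ) * ((n : ℚ) + 1) := by
    have h0 : (2 * n + 2) * Nat.choose (2 * n + 1) n =
        Nat.choose (2 * n + 2) (n + 1) * (n + 1) := Nat.add_one_mul_choose_eq (2 * n + 1) n
    exact_mod_cast congrArg (Nat.cast (R := ℚ)) h0
  have r3 : (2 * (n : ℚ) + 1) * (Nat.choose (2 * n) n : ℚ) =
      (Nat.choose (2 * n + 1) (n + 1) : ℚ) * ((n : ℚ) + 1) := by
    have h0 : (2 * n + 1) * Nat.choose (2 * n) n =
        Nat.choose (2 * n + 1) (n + 1) * (n + 1) := Nat.add_one_mul_choose_eq (2 * n) n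
    exact_mod_cast congrArg (Nat.cast (R := ℚ)) h0
  have r4 : (Nat.choose (2 * n + 1) (n + 1) : ℚ) = (Nat.choose (2 * n + 1) n : ℚ) := by
    have := Nat.choose_symm (n := 2 * n + 1) (k := n + 1) (by omega)
    rw [show 2 * n + 1 - (n + 1) = n by omega] at this
    exact_mod_cast this.symm
  rw [eq_div_iff (show ((n : ℚ) + 2) ≠ 0 by positivity)]
  linear_combination ((n : ℚ) + 2) * e0 + 2 * r1 - (2 * (n : ℚ) + 2) * r2 -
    (4 * (n : ℚ) + 4) * r3 - (4 * (n : ℚ) + 4) * ((n : ℚ) + 1) * r4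
end

section
/- Let n ≥ 0, let T be a standard Young tableau of shape θ^(n), and let ψ(T) = p_1…p_{2n+2} be defined by p_i = E if the entry i+2 of T lies in the arm, p_i = N if i+2 lies in the leg, p_i = S if i+2 lies in the heart and 2 lies in the arm, and p_i = W if i+2 lies in the heart and 2 lies in the leg. If p_i = S for some i, then there exists j < i with p_j = N; and if p_i = W for some i, then there exists j < i with p_j = E. Consequently, the lattice path ψ(T) stays weakly inside the first quadrant. -/
/-! ### Auxiliary lemmas -/

lemma aux_endpt_cons (a : Step) (l : List Step) : endpt (a :: l) = stepVec a + endpt l := by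
  simp [endpt]

lemma aux_endpt_fst (l : List Step) : (endpt l).1 = (l.count Step.E : ℤ) - l.count Step.W := by
  induction l with
  | nil => simp [endpt]
  | cons a l ih =>
    cases a <;> simp [aux_endpt_cons, List.count_cons, stepVec, ih] <;> push_cast <;> ring

lemma aux_endpt_snd (l : List Step) : (endpt l).2 = (l.count Step.N : ℤ) - l.count Step.S := by
  induction l with
  | nil => simp [endpt]
  | cons a l ih =>
    cases a <;> simp [aux_endpt_cons, List.count_cons, stepVec, ih] <;> push_cast <;> ring

lemma aux_count_le_one_of_unique {l : List Step} {s : Step}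
    (h : ∀ a b, (ha : a < l.length) → (hb : b < l.length) → l[a] = s → l[b] = s → a = b) :
    l.count s ≤ 1 := by
  induction l with
  | nil => simp
  | cons x xs ih =>
    by_cases hx : x = s
    · subst hx
      have hnot : x ∉ xs := by
        intro hmem
        obtain ⟨j, hj, hje⟩ := List.getElem_of_mem hmem
        have := h 0 (j+1) (by simp) (by simp; omega) rfl (by simpa using hje)
        omega
      simp [List.count_cons, List.count_eq_zero.mpr hnot]
    · have : (x :: xs).count s = xs.count s := by
        simp [List.count_cons, hx, Ne.symm hx]
      rw [this]
      exact ih (fun a b ha hb hae hbe => by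
        have := h (a+1) (b+1) (by simp; omega) (by simp; omega)
          (by simpa using hae) (by simpa using hbe)
        omega)

section aux
variable {n : ℕ} {T : ℕ × ℕ → ℕ}

lemma cell_arm (j : ℕ) (hj : j ≤ n + 1) : ((0, j) : ℕ × ℕ) ∈ cells n := Or.inl ⟨rfl, hj⟩
lemma cell_heart : ((1,1) : ℕ×ℕ) ∈ cells n := Or.inr (Or.inl rfl)
lemma cell_leg (i : ℕ) (hi : i ≤ n+1) : ((i,0) : ℕ×ℕ) ∈ cells n := by
  rcases Nat.eq_zero_or_pos i with h | h
  · subst h; exact Or.inl ⟨rfl, by omega⟩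
  · exact Or.inr (Or.inr ⟨rfl, h, hi⟩)

lemma T00 (hT : IsSYT n T) : T (0,0) = 1 := by
  obtain ⟨-, hbij, hrow, hcol⟩ := hT
  have h1 : (1:ℕ) ∈ Set.Icc 1 (2*n+4) := by simp
  obtain ⟨c, hc, hTc⟩ := hbij.surjOn h1
  have hc' := hc
  have hge : 1 ≤ T (0,0) := (hbij.mapsTo (cell_arm 0 (by omega))).1
  obtain ⟨c1, c2⟩ := c
  rcases hc with ⟨h1', h2'⟩ | heq | ⟨h1', h2', h3'⟩
  · simp only at h1' h2'
    subst h1'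
    rcases Nat.eq_zero_or_pos c2 with h | h
    · subst h; exact hTc
    · have := hrow (0,0) (cell_arm 0 (by omega)) (0, c2) hc' rfl h
      omega
  · have h01 : ((0,1) : ℕ×ℕ) ∈ cells n := cell_arm 1 (by omega)
    have := hcol (0,1) h01 (1,1) cell_heart rfl (by norm_num)
    have hge2 : 1 ≤ T (0,1) := (hbij.mapsTo h01).1
    rw [heq] at hTc
    omega
  · simp only at h1' h2' h3'
    subst h1'
    have := hcol (0,0) (cell_arm 0 (by omega)) (c1, 0) hc' rfl h2'
    omega

lemma exists_cell (hT : IsSYT n T) {m : ℕ} (h1 : 1 ≤ m) (h2 : m ≤ 2*n+4) :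
    InArm n T m ∨ InHeart T m ∨ InLeg n T m := by
  obtain ⟨c, hc, hTc⟩ := hT.2.1.surjOn (Set.mem_Icc.mpr ⟨h1, h2⟩)
  obtain ⟨c1, c2⟩ := c
  rcases hc with ⟨h1', h2'⟩ | heq | ⟨h1', h2', h3'⟩
  · simp only at h1' h2'; subst h1'; exact Or.inl ⟨c2, h2', hTc⟩
  · rw [heq] at hTc; exact Or.inr (Or.inl hTc)
  · simp only at h1' h2' h3'; subst h1'; exact Or.inr (Or.inr ⟨c1, h3', hTc⟩)

lemma not_arm_T10 (hT : IsSYT n T) : ¬ InArm n T (T (1,0)) := by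
  rintro ⟨j, hj, e⟩
  have := hT.2.1.injOn (cell_arm j hj) (cell_leg 1 (by omega)) e
  simp [Prod.ext_iff] at this

lemma two_arm (hT : IsSYT n T) (h : InArm n T 2) : T (0,1) = 2 := by
  obtain ⟨j, hj, e⟩ := h
  have h00 := T00 hT
  have hj0 : j ≠ 0 := by rintro rfl; omega
  rcases Nat.lt_or_ge j 2 with h | h
  · have : j = 1 := by omega
    subst this; exact e
  · have h1 := hT.2.2.1 (0,1) (cell_arm 1 (by omega)) (0,j) (cell_arm j hj) rfl (by simpa)
    have h3 := hT.2.2.1 (0,0) (cell_arm 0 (by omega)) (0,1) (cell_arm 1 (by omega)) rfl (by norm_num)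
    omega

lemma two_leg (hT : IsSYT n T) (h : InLeg n T 2) : T (1,0) = 2 := by
  obtain ⟨i, hi, e⟩ := h
  have h00 := T00 hT
  have hi0 : i ≠ 0 := by rintro rfl; omega
  rcases Nat.lt_or_ge i 2 with h | h
  · have : i = 1 := by omega
    subst this; exact e
  · have h1 := hT.2.2.2 (1,0) (cell_leg 1 (by omega)) (i,0) (cell_leg i hi) rfl (by simpa)
    have h3 := hT.2.2.2 (0,0) (cell_arm 0 (by omega)) (1,0) (cell_leg 1 (by omega)) rfl (by norm_num)
    omega

lemma psi_length' : (psi n T).length = 2*n+2 := by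
  simp [psi]

open Classical in
lemma psi_getD {i : ℕ} (hi : i < 2*n+2) (d : Step) :
    (psi n T).getD i d =
      (if InArm n T (i + 3) then Step.E
      else if InLeg n T (i + 3) then Step.N
      else if InHeart T (i + 3) ∧ InArm n T 2 then Step.S
      else Step.W) := by
  rw [List.getD_eq_getElem _ _ (by simpa [psi_length'] using hi)]
  simp only [psi, List.getElem_ofFn]

lemma psi_S (hT : IsSYT n T) {i : ℕ} (hi : i < 2*n+2)
    (h : (psi n T).getD i Step.E = Step.S) :
    ∃ j < i, (psi n T).getD j Step.E = Step.N := by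
  rw [psi_getD hi] at h
  split_ifs at h with h1 h2 h3
  have hT11 : T (1,1) = i+3 := h3.1
  have h01 : T (0,1) = 2 := two_arm hT h3.2
  have h00 := T00 hT
  have hgt : 1 < T (1,0) := by
    have := hT.2.2.2 (0,0) (cell_arm 0 (by omega)) (1,0) (cell_leg 1 (by omega)) rfl
      (by norm_num)
    omega
  have hne2 : T (1,0) ≠ 2 := by
    intro e
    have := hT.2.1.injOn (cell_leg 1 (by omega)) (cell_arm 1 (by omega)) (by rw [e, h01])
    simp [Prod.ext_iff] at this
  have hlt : T (1,0) < i+3 := by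
    have := hT.2.2.1 (1,0) (cell_leg 1 (by omega)) (1,1) cell_heart rfl (by norm_num)
    omega
  refine ⟨T (1,0) - 3, by omega, ?_⟩
  rw [psi_getD (by omega), show T (1,0) - 3 + 3 = T (1,0) by omega,
    if_neg (not_arm_T10 hT), if_pos ⟨1, by omega, rfl⟩]

lemma psi_W (hT : IsSYT n T) {i : ℕ} (hi : i < 2*n+2)
    (h : (psi n T).getD i Step.N = Step.W) :
    ∃ j < i, (psi n T).getD j Step.N = Step.E := by
  rw [psi_getD hi] at h
  split_ifs at h with h1 h2 h3
  have hheart : InHeart T (i+3) := by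
    rcases exists_cell hT (show 1 ≤ i+3 by omega) (by omega) with hh | hh | hh
    exacts [absurd hh h1, hh, absurd hh h2]
  have harm2 : ¬ InArm n T 2 := fun ha => h3 ⟨hheart, ha⟩
  have h10 : T (1,0) = 2 := by
    rcases exists_cell hT (show (1:ℕ) ≤ 2 by omega) (by omega) with hh | hh | hh
    · exact absurd hh harm2
    · exfalso; rw [InHeart] at hh; rw [InHeart] at hheart; omega
    · exact two_leg hT hh
  have h00 := T00 hT
  have hgt : 1 < T (0,1) := by
    have := hT.2.2.1 (0,0) (cell_arm 0 (by omega)) (0,1) (cell_arm 1 (by omega)) rfl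
      (by norm_num)
    omega
  have hne2 : T (0,1) ≠ 2 := by
    intro e
    have := hT.2.1.injOn (cell_arm 1 (by omega)) (cell_leg 1 (by omega)) (by rw [e, h10])
    simp [Prod.ext_iff] at this
  have hlt : T (0,1) < i+3 := by
    have := hT.2.2.2 (0,1) (cell_arm 1 (by omega)) (1,1) cell_heart rfl (by norm_num)
    rw [InHeart] at hheart
    omega
  refine ⟨T (0,1) - 3, by omega, ?_⟩
  rw [psi_getD (by omega), show T (0,1) - 3 + 3 = T (0,1) by omega,
    if_pos ⟨1, by omega, rfl⟩]

lemma heart_SW (hT : IsSYT n T) {a : ℕ} {d : Step} (ha : a < 2*n+2)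
    (h : (psi n T).getD a d = Step.S ∨ (psi n T).getD a d = Step.W) :
    T (1,1) = a+3 := by
  rw [psi_getD ha] at h
  split_ifs at h with h1 h2 h3
  · rcases h with h | h <;> simp at h
  · rcases h with h | h <;> simp at h
  · exact h3.1
  · rcases exists_cell hT (show 1 ≤ a+3 by omega) (by omega) with hh | hh | hh
    exacts [absurd hh h1, hh, absurd hh h2]

end aux

/-- In the word `ψ(T)` (0-indexed here: position `i` of the list is the
letter `p_{i+1}`), any `S` is preceded by an `N` and any `W` is preceded by an `E`;
consequently the lattice path `ψ(T)` stays weakly inside the first quadrant. -/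
theorem psi_stays_in_quadrant (n : ℕ) (T : ℕ × ℕ → ℕ) (hT : IsSYT n T) :
    (∀ i < 2 * n + 2, (psi n T).getD i Step.E = Step.S →
      ∃ j < i, (psi n T).getD j Step.E = Step.N) ∧
    (∀ i < 2 * n + 2, (psi n T).getD i Step.N = Step.W →
      ∃ j < i, (psi n T).getD j Step.N = Step.E) ∧
    (∀ k : ℕ, 0 ≤ (endpt ((psi n T).take k)).1 ∧ 0 ≤ (endpt ((psi n T).take k)).2) := by
  have hlen : (psi n T).length = 2*n+2 := psi_length'
  refine ⟨fun i hi h => psi_S hT hi h, fun i hi h => psi_W hT hi h, ?_⟩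
  intro k
  constructor
  · -- x-coordinate: count E - count W
    rw [aux_endpt_fst]
    by_cases hc : Step.W ∈ (psi n T).take k
    · obtain ⟨a, ha, hae⟩ := List.getElem_of_mem hc
      rw [List.length_take] at ha
      have hak : a < k := lt_of_lt_of_le ha (min_le_left _ _)
      have halen : a < (psi n T).length := lt_of_lt_of_le ha (min_le_right _ _)
      have haw : (psi n T)[a] = Step.W := by rw [← hae, List.getElem_take]
      have hgetD : (psi n T).getD a Step.N = Step.W := by
        rw [List.getD_eq_getElem _ _ halen]; exact haw
      obtain ⟨j, hja, hjE⟩ := psi_W hT (by omega) hgetD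
      have hWle : ((psi n T).take k).count Step.W ≤ 1 := by
        refine le_trans (((psi n T).take_sublist k).count_le Step.W) ?_
        apply aux_count_le_one_of_unique
        intro a b ha' hb' hae' hbe'
        have h1 := heart_SW hT (a := a) (d := Step.E) (by omega)
          (Or.inr (by rw [List.getD_eq_getElem _ _ ha']; exact hae'))
        have h2 := heart_SW hT (a := b) (d := Step.E) (by omega)
          (Or.inr (by rw [List.getD_eq_getElem _ _ hb']; exact hbe'))
        omega
      have hEpos : 0 < ((psi n T).take k).count Step.E := by
        rw [List.count_pos_iff]
        have hjlen : j < (psi n T).length := by omega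
        have : ((psi n T).take k)[j]'(by rw [List.length_take]; omega) = Step.E := by
          rw [List.getElem_take, ← List.getD_eq_getElem _ Step.N hjlen]; exact hjE
        exact this ▸ List.getElem_mem _
      omega
    · rw [List.count_eq_zero.mpr hc]
      simp
  · -- y-coordinate: count N - count S
    rw [aux_endpt_snd]
    by_cases hc : Step.S ∈ (psi n T).take k
    · obtain ⟨a, ha, hae⟩ := List.getElem_of_mem hc
      rw [List.length_take] at ha
      have hak : a < k := lt_of_lt_of_le ha (min_le_left _ _)
      have halen : a < (psi n T).length := lt_of_lt_of_le ha (min_le_right _ _)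
      have haw : (psi n T)[a] = Step.S := by rw [← hae, List.getElem_take]
      have hgetD : (psi n T).getD a Step.E = Step.S := by
        rw [List.getD_eq_getElem _ _ halen]; exact haw
      obtain ⟨j, hja, hjN⟩ := psi_S hT (by omega) hgetD
      have hSle : ((psi n T).take k).count Step.S ≤ 1 := by
        refine le_trans (((psi n T).take_sublist k).count_le Step.S) ?_
        apply aux_count_le_one_of_unique
        intro a b ha' hb' hae' hbe'
        have h1 := heart_SW hT (a := a) (d := Step.E) (by omega)
          (Or.inl (by rw [List.getD_eq_getElem _ _ ha']; exact hae'))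
        have h2 := heart_SW hT (a := b) (d := Step.E) (by omega)
          (Or.inl (by rw [List.getD_eq_getElem _ _ hb']; exact hbe'))
        omega
      have hNpos : 0 < ((psi n T).take k).count Step.N := by
        rw [List.count_pos_iff]
        have hjlen : j < (psi n T).length := by omega
        have : ((psi n T).take k)[j]'(by rw [List.length_take]; omega) = Step.N := by
          rw [List.getElem_take, ← List.getD_eq_getElem _ Step.E hjlen]; exact hjN
        exact this ▸ List.getElem_mem _
      omega
    · rw [List.count_eq_zero.mpr hc]
      simp
end
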